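/- (Pivot quality with lower medians of groups of 4.) Let j ∈ ℕ and k = 2j + 1. Let S be a finite set of 4k distinct real numbers partitioned into k pairwise disjoint groups G₁, …, G_k of 4 elements each, let mᵢ be the lower median (2nd smallest element) of Gᵢ, and let m be the median ((j+1)-th smallest element) of the set M = {m₁, …, m_k}. Then |{x ∈ S : x ≤ m}| ≥ 2(j+1) and |{x ∈ S : x ≥ m}| ≥ 3(j+1). In particular, at least |S|/4 elements of S are ≤ m and at least 3·|S|/8 elements of S are ≥ m. -/

import Mathlib

/-- The `j`-th smallest element (0-indexed) of a finite set of reals. -/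
noncomputable def kthSmallest (s : Finset ℝ) (j : ℕ) : ℝ :=
  (s.sort (· ≤ ·)).getD j 0

lemma kth_eq_get {s : Finset ℝ} {j : ℕ} (hl : j < (s.sort (· ≤ ·)).length) :
    kthSmallest s j = (s.sort (· ≤ ·))[j] := by
  simp [kthSmallest, List.getD_eq_getElem?_getD, List.getElem?_eq_getElem hl]

lemma kth_mem {s : Finset ℝ} {j : ℕ} (h : j < s.card) : kthSmallest s j ∈ s := by
  have hl : j < (s.sort (· ≤ ·)).length := by rwa [Finset.length_sort]
  rw [kth_eq_get hl, ← Finset.mem_sort (α := ℝ) (· ≤ ·)]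
  exact List.getElem_mem hl

lemma card_filter_eq_countP (s : Finset ℝ) (p : ℝ → Prop) [DecidablePred p] :
    (s.filter p).card = (s.sort (· ≤ ·)).countP (fun x => decide (p x)) := by
  have hperm : ((s.sort (· ≤ ·) : List ℝ) : Multiset ℝ) = s.val := Finset.sort_eq ..
  rw [Finset.card, Finset.filter_val, ← Multiset.countP_eq_card_filter, ← hperm,
    Multiset.coe_countP]

lemma filter_le_kth {s : Finset ℝ} {j : ℕ} (h : j < s.card) :
    j + 1 ≤ (s.filter (fun x => x ≤ kthSmallest s j)).card := by
  classical
  have hl : j < (s.sort (· ≤ ·)).length := by rwa [Finset.length_sort]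
  rw [card_filter_eq_countP]
  set l := s.sort (· ≤ ·) with hldef
  have hsorted : l.Pairwise (· ≤ ·) := Finset.pairwise_sort ..
  have htake : (l.take (j+1)).countP (fun x => decide (x ≤ kthSmallest s j)) = j + 1 := by
    rw [List.countP_eq_length.mpr, List.length_take]
    · omega
    · intro a ha
      obtain ⟨i, hi, hia⟩ := List.getElem_of_mem ha
      have hil : i < l.length := by
        have : (l.take (j+1)).length = min (j+1) l.length := List.length_take; omega
      rw [List.getElem_take] at hia
      have hle : l[i] ≤ l[j] := by
        rcases lt_or_eq_of_le (show i ≤ j by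
          have : (l.take (j+1)).length = min (j+1) l.length := List.length_take; omega) with h' | h'
        · exact (List.pairwise_iff_get.mp hsorted) ⟨i, hil⟩ ⟨j, hl⟩ h'
        · subst h'; exact le_refl _
      rw [kth_eq_get hl] at *
      simp only [decide_eq_true_eq, ← hia]
      exact hle
  calc j + 1 = (l.take (j+1)).countP (fun x => decide (x ≤ kthSmallest s j)) := htake.symm
    _ ≤ l.countP (fun x => decide (x ≤ kthSmallest s j)) :=
        List.Sublist.countP_le (List.take_sublist _ _)

lemma filter_ge_kth {s : Finset ℝ} {j : ℕ} (h : j < s.card) :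
    s.card - j ≤ (s.filter (fun x => kthSmallest s j ≤ x)).card := by
  classical
  have hl : j < (s.sort (· ≤ ·)).length := by rwa [Finset.length_sort]
  rw [card_filter_eq_countP]
  set l := s.sort (· ≤ ·) with hldef
  have hlen : l.length = s.card := Finset.length_sort _
  have hsorted : l.Pairwise (· ≤ ·) := Finset.pairwise_sort ..
  have hdrop : (l.drop j).countP (fun x => decide (kthSmallest s j ≤ x)) = s.card - j := by
    rw [List.countP_eq_length.mpr, List.length_drop, hlen]
    intro a ha
    obtain ⟨i, hi, hia⟩ := List.getElem_of_mem ha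
    rw [List.getElem_drop] at hia
    have hil : j + i < l.length := by
      have : (l.drop j).length = l.length - j := List.length_drop; omega
    have hle : l[j] ≤ l[j+i] := by
      rcases Nat.eq_or_lt_of_le (Nat.le_add_right j i) with h' | h'
      · simp [← h']
      · exact (List.pairwise_iff_get.mp hsorted) ⟨j, hl⟩ ⟨j+i, hil⟩ h'
    rw [kth_eq_get hl]
    simp only [decide_eq_true_eq, ← hia]
    exact hle
  calc s.card - j = (l.drop j).countP _ := hdrop.symm
    _ ≤ l.countP (fun x => decide (kthSmallest s j ≤ x)) :=
        List.Sublist.countP_le (List.drop_sublist _ _)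


/-- Pivot quality with lower medians of groups of 4: the median `m` of the
`k = 2j+1` lower medians is `≤` at least `2(j+1)` elements of `S` and `≥` at
least `3(j+1)` elements of `S`. -/
theorem pivot_quality_group4_lower (j : ℕ) (k : ℕ) (hk : k = 2 * j + 1)
    (S : Finset ℝ) (hS : S.card = 4 * k)
    (G : Fin k → Finset ℝ)
    (hdisj : ∀ i i' : Fin k, i ≠ i' → Disjoint (G i) (G i'))
    (hunion : Finset.univ.biUnion G = S)
    (hcard : ∀ i, (G i).card = 4)
    (M : Finset ℝ) (hM : M = Finset.image (fun i => kthSmallest (G i) 1) Finset.univ)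
    (m : ℝ) (hm : m = kthSmallest M j) :
    2 * (j + 1) ≤ (S.filter (fun x => x ≤ m)).card ∧
    3 * (j + 1) ≤ (S.filter (fun x => m ≤ x)).card := by
  classical
  set f : Fin k → ℝ := fun i => kthSmallest (G i) 1 with hf
  have hmem : ∀ i, f i ∈ G i := fun i => kth_mem (by rw [hcard]; norm_num)
  have hinj : Function.Injective f := by
    intro i i' h
    by_contra hne
    exact Finset.disjoint_left.mp (hdisj i i' hne) (hmem i) (h ▸ hmem i')
  have hMcard : M.card = k := by
    rw [hM, Finset.card_image_of_injective _ hinj, Finset.card_univ, Fintype.card_fin]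
  have hjM : j < M.card := by omega
  -- generic: count of indices with property of f i equals count in M
  have hcount : ∀ (p : ℝ → Prop) [DecidablePred p],
      (Finset.univ.filter (fun i => p (f i))).card = (M.filter p).card := by
    intro p _
    rw [hM, Finset.filter_image, Finset.card_image_of_injective _ hinj]
  constructor
  · -- lower bound for ≤ m
    set T := Finset.univ.filter (fun i => f i ≤ m) with hT
    have hTcard : j + 1 ≤ T.card := by
      rw [hT, hcount (fun x => x ≤ m)]
      simpa [hm] using filter_le_kth hjM
    have hsub : T.biUnion (fun i => (G i).filter (fun x => x ≤ m)) ⊆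
        S.filter (fun x => x ≤ m) := by
      intro x hx
      obtain ⟨i, _, hxi⟩ := Finset.mem_biUnion.mp hx
      rw [Finset.mem_filter] at hxi ⊢
      exact ⟨hunion ▸ Finset.mem_biUnion.mpr ⟨i, Finset.mem_univ i, hxi.1⟩, hxi.2⟩
    have hbig : 2 * (j + 1) ≤ (T.biUnion (fun i => (G i).filter (fun x => x ≤ m))).card := by
      rw [Finset.card_biUnion (fun i _ i' _ hne =>
        Finset.disjoint_filter_filter (hdisj i i' hne))]
      calc 2 * (j + 1) ≤ 2 * T.card := by omega
        _ = ∑ _i ∈ T, 2 := by rw [Finset.sum_const, smul_eq_mul, mul_comm]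
        _ ≤ ∑ i ∈ T, ((G i).filter (fun x => x ≤ m)).card := by
            apply Finset.sum_le_sum
            intro i hi
            have hmi : f i ≤ m := (Finset.mem_filter.mp hi).2
            have h2 : 1 + 1 ≤ ((G i).filter (fun x => x ≤ f i)).card :=
              filter_le_kth (by rw [hcard]; norm_num)
            refine le_trans h2 (Finset.card_le_card ?_)
            intro x hx
            rw [Finset.mem_filter] at hx ⊢
            exact ⟨hx.1, le_trans hx.2 hmi⟩
    exact le_trans hbig (Finset.card_le_card hsub)
  · -- lower bound for ≥ m
    set T := Finset.univ.filter (fun i => m ≤ f i) with hT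
    have hTcard : j + 1 ≤ T.card := by
      rw [hT, hcount (fun x => m ≤ x)]
      have := filter_ge_kth hjM
      rw [← hm] at this
      omega
    have hsub : T.biUnion (fun i => (G i).filter (fun x => m ≤ x)) ⊆
        S.filter (fun x => m ≤ x) := by
      intro x hx
      obtain ⟨i, _, hxi⟩ := Finset.mem_biUnion.mp hx
      rw [Finset.mem_filter] at hxi ⊢
      exact ⟨hunion ▸ Finset.mem_biUnion.mpr ⟨i, Finset.mem_univ i, hxi.1⟩, hxi.2⟩
    have hbig : 3 * (j + 1) ≤ (T.biUnion (fun i => (G i).filter (fun x => m ≤ x))).card := by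
      rw [Finset.card_biUnion (fun i _ i' _ hne =>
        Finset.disjoint_filter_filter (hdisj i i' hne))]
      calc 3 * (j + 1) ≤ 3 * T.card := by omega
        _ = ∑ _i ∈ T, 3 := by rw [Finset.sum_const, smul_eq_mul, mul_comm]
        _ ≤ ∑ i ∈ T, ((G i).filter (fun x => m ≤ x)).card := by
            apply Finset.sum_le_sum
            intro i hi
            have hmi : m ≤ f i := (Finset.mem_filter.mp hi).2
            have h3 : (G i).card - 1 ≤ ((G i).filter (fun x => f i ≤ x)).card :=
              filter_ge_kth (by rw [hcard]; norm_num)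
            rw [hcard] at h3
            refine le_trans (by omega : 3 ≤ (Finset.filter (fun x => f i ≤ x) (G i)).card)
              (Finset.card_le_card ?_)
            intro x hx
            rw [Finset.mem_filter] at hx ⊢
            exact ⟨hx.1, le_trans hmi hx.2⟩
    exact le_trans hbig (Finset.card_le_card hsub)
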